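/- With G = N ⋊ T and notation as in Tahara's decomposition, for all n ≥ 1 one has I(G)^n · I(T) = I(T)^{n+1} ⊕ 𝒦_{n+1} as abelian groups, where 𝒦_{n+1} = Σ_{i=1}^{n} Λ_{n+1-i}·I(T)^i. -/

import Mathlib

open MonoidAlgebra

/-- The ℤ-submodule of `ℤ[G]` generated by the elements `h - 1`, `h ∈ H`. -/
noncomputable def relAug (G : Type*) [Group G] (H : Subgroup G) :
    Submodule ℤ (MonoidAlgebra ℤ G) :=
  Submodule.span ℤ {x | ∃ h ∈ H, x = MonoidAlgebra.of ℤ G h - 1}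

/-- The augmentation ideal `I(G)` of `ℤ[G]`, as a ℤ-submodule. -/
noncomputable def augI (G : Type*) [Group G] : Submodule ℤ (MonoidAlgebra ℤ G) :=
  Submodule.span ℤ {x | ∃ g : G, x = MonoidAlgebra.of ℤ G g - 1}

/-- The filtration ideal `I_𝒢^n(G) ⊆ ℤ[G]` associated to an N-series `Gs`. -/
noncomputable def nIdeal (G : Type*) [Group G] (Gs : ℕ → Subgroup G) (n : ℕ) :
    Submodule ℤ (MonoidAlgebra ℤ G) :=
  Submodule.span ℤ
    {x | ∃ l : List (ℕ × G), l ≠ [] ∧ (∀ p ∈ l, 1 ≤ p.1 ∧ p.2 ∈ Gs p.1) ∧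
      n ≤ (l.map Prod.fst).sum ∧
      x = (l.map fun p => MonoidAlgebra.of ℤ G p.2 - 1).prod}

/-- `𝒦_n = Σ_{i=1}^{n-1} Δ_{n-i}·I(T)^i`, for a filtration `Δ` of `I(N)`. -/
noncomputable def Kfil (G : Type*) [Group G] (Δ : ℕ → Submodule ℤ (MonoidAlgebra ℤ G))
    (T : Subgroup G) (n : ℕ) : Submodule ℤ (MonoidAlgebra ℤ G) :=
  ⨆ i ∈ Finset.Ico 1 n, Δ (n - i) * (relAug G T) ^ i

section Aux

variable {G : Type*} [Group G]

lemma mem_relAug {H : Subgroup G} {h : G} (hh : h ∈ H) :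
    MonoidAlgebra.of ℤ G h - 1 ∈ relAug G H :=
  Submodule.subset_span ⟨h, hh, rfl⟩

lemma mem_augI (g : G) : MonoidAlgebra.of ℤ G g - 1 ∈ augI G :=
  Submodule.subset_span ⟨g, rfl⟩

lemma relAug_mul_relAug (H : Subgroup G) : relAug G H * relAug G H ≤ relAug G H := by
  rw [relAug, Submodule.span_mul_span]
  refine Submodule.span_le.2 ?_
  rintro x ⟨a, ⟨h, hh, rfl⟩, b, ⟨k, hk, rfl⟩, rfl⟩
  have key : (of ℤ G h - 1) * (of ℤ G k - 1)
      = (of ℤ G (h * k) - 1) - (of ℤ G h - 1) - (of ℤ G k - 1) := by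
    rw [map_mul]; noncomm_ring
  simp only [key]
  exact sub_mem (sub_mem (mem_relAug (mul_mem hh hk)) (mem_relAug hh)) (mem_relAug hk)

lemma augI_mul_augI : augI G * augI G ≤ augI G := by
  rw [augI, Submodule.span_mul_span]
  refine Submodule.span_le.2 ?_
  rintro x ⟨a, ⟨h, rfl⟩, b, ⟨k, rfl⟩, rfl⟩
  have key : (of ℤ G h - 1) * (of ℤ G k - 1)
      = (of ℤ G (h * k) - 1) - (of ℤ G h - 1) - (of ℤ G k - 1) := by
    rw [map_mul]; noncomm_ring
  simp only [key]
  exact sub_mem (sub_mem (mem_augI _) (mem_augI _)) (mem_augI _)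

lemma pow_mono {M N : Submodule ℤ (MonoidAlgebra ℤ G)} (h : M ≤ N) :
    ∀ k : ℕ, M ^ k ≤ N ^ k := by
  intro k
  induction k with
  | zero => simp
  | succ k ih =>
    rw [pow_succ, pow_succ]
    exact mul_le_mul' ih h

lemma pow_succ_le {M : Submodule ℤ (MonoidAlgebra ℤ G)} (hM : M * M ≤ M) :
    ∀ k, 1 ≤ k → M ^ (k + 1) ≤ M ^ k := by
  intro k hk
  induction k with
  | zero => omega
  | succ k ih =>
    rcases Nat.lt_or_ge 1 (k + 1) with h | h
    · calc M ^ (k + 2) = M ^ (k + 1) * M := pow_succ _ _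
        _ ≤ M ^ k * M := (mul_le_mul' (ih (by omega)) le_rfl)
        _ = M ^ (k + 1) := (pow_succ _ _).symm
    · have : k = 0 := by omega
      subst this
      rw [pow_one]
      calc M ^ 2 = M * M := sq M
        _ ≤ M := hM

lemma pow_anti {M : Submodule ℤ (MonoidAlgebra ℤ G)} (hM : M * M ≤ M) :
    ∀ {a b : ℕ}, 1 ≤ a → a ≤ b → M ^ b ≤ M ^ a := by
  intro a b ha hab
  induction b with
  | zero => omega
  | succ b ih =>
    rcases Nat.eq_or_lt_of_le hab with h | h
    · rw [h]
    · exact (pow_succ_le hM b (by omega)).trans (ih (by omega))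

lemma of_mul_mem_augI (g : G) {x : MonoidAlgebra ℤ G} (hx : x ∈ augI G) :
    of ℤ G g * x ∈ augI G := by
  induction hx using Submodule.span_induction with
  | mem x hx =>
    obtain ⟨h, rfl⟩ := hx
    have key : of ℤ G g * (of ℤ G h - 1) = (of ℤ G (g * h) - 1) - (of ℤ G g - 1) := by
      rw [map_mul]; noncomm_ring
    rw [key]; exact sub_mem (mem_augI _) (mem_augI _)
  | zero => simp
  | add x y _ _ hx hy => rw [mul_add]; exact add_mem hx hy
  | smul a x _ hx => rw [mul_smul_comm]; exact Submodule.smul_mem _ _ hx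

lemma mul_of_mem_augI (g : G) {x : MonoidAlgebra ℤ G} (hx : x ∈ augI G) :
    x * of ℤ G g ∈ augI G := by
  induction hx using Submodule.span_induction with
  | mem x hx =>
    obtain ⟨h, rfl⟩ := hx
    have key : (of ℤ G h - 1) * of ℤ G g = (of ℤ G (h * g) - 1) - (of ℤ G g - 1) := by
      rw [map_mul]; noncomm_ring
    rw [key]; exact sub_mem (mem_augI _) (mem_augI _)
  | zero => simp
  | add x y _ _ hx hy => rw [add_mul]; exact add_mem hx hy
  | smul a x _ hx => rw [smul_mul_assoc]; exact Submodule.smul_mem _ _ hx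

lemma of_mul_mem_augI_pow (g : G) {m : ℕ} (hm : 1 ≤ m) {x : MonoidAlgebra ℤ G}
    (hx : x ∈ augI G ^ m) : of ℤ G g * x ∈ augI G ^ m := by
  obtain ⟨k, rfl⟩ := Nat.exists_eq_add_of_le hm
  rw [pow_add, pow_one] at hx ⊢
  refine Submodule.mul_induction_on hx (fun a ha b hb => ?_) (fun x y hx hy => ?_)
  · rw [← mul_assoc]
    exact Submodule.mul_mem_mul (of_mul_mem_augI g ha) hb
  · rw [mul_add]; exact add_mem hx hy

lemma mul_of_mem_augI_pow (g : G) {m : ℕ} (hm : 1 ≤ m) {x : MonoidAlgebra ℤ G}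
    (hx : x ∈ augI G ^ m) : x * of ℤ G g ∈ augI G ^ m := by
  obtain ⟨k, rfl⟩ := Nat.exists_eq_add_of_le hm
  rw [add_comm, pow_succ] at hx ⊢
  refine Submodule.mul_induction_on hx (fun a ha b hb => ?_) (fun x y hx hy => ?_)
  · rw [mul_assoc]
    exact Submodule.mul_mem_mul ha (mul_of_mem_augI g hb)
  · rw [add_mul]; exact add_mem hx hy

end Aux
section Dim

variable {G : Type*} [Group G]

open scoped commutatorElement

lemma mul_mem_augI_pow {m : ℕ} (hm : 1 ≤ m) (z : MonoidAlgebra ℤ G) {x : MonoidAlgebra ℤ G}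
    (hx : x ∈ augI G ^ m) : z * x ∈ augI G ^ m := by
  induction z using MonoidAlgebra.induction_on with
  | of g => exact of_mul_mem_augI_pow g hm hx
  | add f g hf hg => rw [add_mul]; exact add_mem hf hg
  | smul r f hf => rw [smul_mul_assoc]; exact Submodule.smul_mem _ _ hf

lemma augI_pow_mul_le {a b : ℕ} : augI G ^ a * augI G ^ b ≤ augI G ^ (a + b) :=
  le_of_eq (pow_add (augI G) a b).symm

/-- The subgroup of elements `g` with `g - 1 ∈ I(G)^(m+1)`. -/
noncomputable def dimSub (G : Type*) [Group G] (m : ℕ) : Subgroup G where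
  carrier := {g | of ℤ G g - 1 ∈ augI G ^ (m + 1)}
  one_mem' := by
    simp only [Set.mem_setOf_eq, map_one, sub_self]
    exact zero_mem _
  mul_mem' := by
    intro a b ha hb
    simp only [Set.mem_setOf_eq] at *
    have key : of ℤ G (a * b) - 1 =
        (of ℤ G a - 1) * (of ℤ G b - 1) + (of ℤ G a - 1) + (of ℤ G b - 1) := by
      rw [map_mul]; noncomm_ring
    rw [key]
    refine add_mem (add_mem ?_ ha) hb
    have h1 : (of ℤ G a - 1) * (of ℤ G b - 1) ∈ augI G ^ (m + 1) * augI G ^ (m + 1) :=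
      Submodule.mul_mem_mul ha hb
    have h2 : augI G ^ (m + 1) * augI G ^ (m + 1) ≤ augI G ^ (m + 1) :=
      augI_pow_mul_le.trans (pow_anti augI_mul_augI (by omega) (by omega))
    exact h2 h1
  inv_mem' := by
    intro a ha
    simp only [Set.mem_setOf_eq] at *
    have key : of ℤ G a⁻¹ - 1 = -(of ℤ G a⁻¹ * (of ℤ G a - 1)) := by
      have h1 : of ℤ G a⁻¹ * of ℤ G a = 1 := by rw [← map_mul, inv_mul_cancel, map_one]
      rw [mul_sub, h1]; noncomm_ring
    rw [key]
    exact neg_mem (of_mul_mem_augI_pow _ (by omega) ha)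

lemma Ns_le_dimSub (Ns : ℕ → Subgroup G)
    (hNsrec : ∀ i, 1 ≤ i → Ns (i + 1) = ⁅Ns i, (⊤ : Subgroup G)⁆) :
    ∀ k, Ns (k + 1) ≤ dimSub G k := by
  intro k
  induction k with
  | zero =>
    intro b _
    show of ℤ G b - 1 ∈ augI G ^ (0 + 1)
    rw [pow_one]
    exact mem_augI b
  | succ k ih =>
    rw [hNsrec (k + 1) (by omega), Subgroup.commutator_le]
    intro g hg h _
    show of ℤ G ⁅g, h⁆ - 1 ∈ augI G ^ (k + 1 + 1)
    have hg' : of ℤ G g - 1 ∈ augI G ^ (k + 1) := ih hg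
    have hh' : of ℤ G h - 1 ∈ augI G := mem_augI h
    have e1 : of ℤ G g * of ℤ G h * of ℤ G (g⁻¹ * h⁻¹) = of ℤ G ⁅g, h⁆ := by
      rw [← map_mul, ← map_mul]
      congr 1
      rw [commutatorElement_def]
      group
    have e2 : of ℤ G h * of ℤ G g * of ℤ G (g⁻¹ * h⁻¹) = of ℤ G (h * g * (g⁻¹ * h⁻¹)) := by
      rw [← map_mul, ← map_mul]
    have e2' : h * g * (g⁻¹ * h⁻¹) = 1 := by group
    have key : of ℤ G ⁅g, h⁆ - 1 =
        ((of ℤ G g - 1) * (of ℤ G h - 1) - (of ℤ G h - 1) * (of ℤ G g - 1)) *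
          of ℤ G (g⁻¹ * h⁻¹) := by
      have expand : (of ℤ G g - 1) * (of ℤ G h - 1) - (of ℤ G h - 1) * (of ℤ G g - 1)
          = of ℤ G g * of ℤ G h - of ℤ G h * of ℤ G g := by noncomm_ring
      rw [expand, sub_mul, e1, e2, e2', map_one]
    rw [key]
    have m1 : (of ℤ G g - 1) * (of ℤ G h - 1) ∈ augI G ^ (k + 1 + 1) := by
      have h3 := Submodule.mul_mem_mul hg' hh'
      rwa [← pow_succ] at h3
    have m2 : (of ℤ G h - 1) * (of ℤ G g - 1) ∈ augI G ^ (k + 1 + 1) := by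
      have h3 := Submodule.mul_mem_mul hh' hg'
      rwa [← pow_succ'] at h3
    exact mul_of_mem_augI_pow _ (by omega) (sub_mem m1 m2)

end Dim
section NId

variable {G : Type*} [Group G] {Ns : ℕ → Subgroup G}

lemma mem_nIdeal_single {k : ℕ} (hk : 1 ≤ k) {b : G} (hb : b ∈ Ns k) :
    of ℤ G b - 1 ∈ nIdeal G Ns k := by
  refine Submodule.subset_span ⟨[(k, b)], by simp, ?_, by simp, by simp⟩
  rintro p hp
  simp only [List.mem_singleton] at hp
  subst hp
  exact ⟨hk, hb⟩

lemma nIdeal_anti {j j' : ℕ} (h : j' ≤ j) : nIdeal G Ns j ≤ nIdeal G Ns j' := by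
  refine Submodule.span_le.2 ?_
  rintro x ⟨l, h1, h2, h3, rfl⟩
  exact Submodule.subset_span ⟨l, h1, h2, le_trans h h3, rfl⟩

lemma nIdeal_mul_nIdeal (j k : ℕ) :
    nIdeal G Ns j * nIdeal G Ns k ≤ nIdeal G Ns (j + k) := by
  rw [nIdeal, nIdeal, Submodule.span_mul_span]
  refine Submodule.span_le.2 ?_
  rintro x ⟨a, ⟨l₁, h11, h12, h13, rfl⟩, b, ⟨l₂, h21, h22, h23, rfl⟩, rfl⟩
  refine Submodule.subset_span ⟨l₁ ++ l₂, by simp [h11], ?_, ?_, ?_⟩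
  · intro p hp
    rcases List.mem_append.mp hp with h | h
    · exact h12 p h
    · exact h22 p h
  · rw [List.map_append, List.sum_append]
    exact add_le_add h13 h23
  · rw [List.map_append, List.prod_append]

lemma nIdeal_le_pow (hNsrec : ∀ i, 1 ≤ i → Ns (i + 1) = ⁅Ns i, (⊤ : Subgroup G)⁆)
    {j : ℕ} (hj : 1 ≤ j) : nIdeal G Ns j ≤ augI G ^ j := by
  have hdim : ∀ k, 1 ≤ k → ∀ b ∈ Ns k, of ℤ G b - 1 ∈ augI G ^ k := by
    intro k hk b hb
    obtain ⟨k, rfl⟩ : ∃ k', k = k' + 1 := ⟨k - 1, by omega⟩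
    exact Ns_le_dimSub Ns hNsrec k hb
  have hmain : ∀ l : List (ℕ × G), l ≠ [] → (∀ p ∈ l, 1 ≤ p.1 ∧ p.2 ∈ Ns p.1) →
      (l.map fun p => of ℤ G p.2 - 1).prod ∈ augI G ^ (l.map Prod.fst).sum := by
    intro l
    induction l with
    | nil => intro h; exact absurd rfl h
    | cons p l ih =>
      intro _ hcond
      rcases List.eq_nil_or_concat l with hl | _
      · subst hl
        simp only [List.map_cons, List.map_nil, List.prod_cons, List.prod_nil, mul_one,
          List.sum_cons, List.sum_nil, add_zero]
        exact hdim p.1 (hcond p (by simp)).1 p.2 (hcond p (by simp)).2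
      · have hl : l ≠ [] := by rintro rfl; simp_all
        simp only [List.map_cons, List.prod_cons, List.sum_cons]
        rw [pow_add]
        exact Submodule.mul_mem_mul
          (hdim p.1 (hcond p (by simp)).1 p.2 (hcond p (by simp)).2)
          (ih hl (fun q hq => hcond q (by simp [hq])))
  refine Submodule.span_le.2 ?_
  rintro x ⟨l, h1, h2, h3, rfl⟩
  exact pow_anti augI_mul_augI hj h3 (hmain l h1 h2)

end NId
section Swap

variable {G : Type*} [Group G] {Ns : ℕ → Subgroup G} {T : Subgroup G}

lemma lift_mul {a : ℕ} {y : MonoidAlgebra ℤ G}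
    (hy : y ∈ nIdeal G Ns a * relAug G T ⊔ nIdeal G Ns (a + 1))
    {k : ℕ} {d : G} (hk : 1 ≤ k) (hd : d ∈ Ns k) :
    (of ℤ G d - 1) * y ∈ nIdeal G Ns (k + a) * relAug G T ⊔ nIdeal G Ns (k + a + 1) := by
  obtain ⟨y₁, hy₁, y₂, hy₂, rfl⟩ := Submodule.mem_sup.mp hy
  rw [mul_add]
  refine add_mem (Submodule.mem_sup_left ?_) (Submodule.mem_sup_right ?_)
  · have h1 : (of ℤ G d - 1) * y₁ ∈ nIdeal G Ns k * (nIdeal G Ns a * relAug G T) :=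
      Submodule.mul_mem_mul (mem_nIdeal_single hk hd) hy₁
    rw [← mul_assoc] at h1
    exact (mul_le_mul' (nIdeal_mul_nIdeal k a) (le_refl (relAug G T))) h1
  · have h1 : (of ℤ G d - 1) * y₂ ∈ nIdeal G Ns k * nIdeal G Ns (a + 1) :=
      Submodule.mul_mem_mul (mem_nIdeal_single hk hd) hy₂
    exact nIdeal_mul_nIdeal k (a + 1) h1

lemma swap_aux
    (hnorm : ∀ k, 1 ≤ k → ∀ b ∈ Ns k, ∀ t : G, t * b * t⁻¹ ∈ Ns k)
    (hNsrec : ∀ i, 1 ≤ i → Ns (i + 1) = ⁅Ns i, (⊤ : Subgroup G)⁆) :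
    ∀ l : List (ℕ × G), l ≠ [] → (∀ p ∈ l, 1 ≤ p.1 ∧ p.2 ∈ Ns p.1) → ∀ t ∈ T,
      (of ℤ G t - 1) * (l.map fun p => of ℤ G p.2 - 1).prod ∈
        nIdeal G Ns ((l.map Prod.fst).sum) * relAug G T ⊔
          nIdeal G Ns ((l.map Prod.fst).sum + 1) := by
  intro l
  induction l with
  | nil => intro h; exact absurd rfl h
  | cons p l' ih =>
    intro _ hcond t ht
    obtain ⟨k, b⟩ := p
    have hk : 1 ≤ k := (hcond (k, b) (by simp)).1
    have hb : b ∈ Ns k := (hcond (k, b) (by simp)).2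
    have hb' : t * b * t⁻¹ ∈ Ns k := hnorm k hk b hb t
    have hc : t * b * t⁻¹ * b⁻¹ ∈ Ns (k + 1) := by
      rw [hNsrec k hk, Subgroup.commutator_comm]
      exact Subgroup.commutator_mem_commutator (Subgroup.mem_top t) hb
    have e1 : of ℤ G (t * b * t⁻¹ * b⁻¹) * of ℤ G b = of ℤ G (t * b * t⁻¹) := by
      rw [← map_mul]; congr 1; group
    have e2 : of ℤ G (t * b * t⁻¹) * of ℤ G t = of ℤ G t * of ℤ G b := by
      rw [← map_mul, ← map_mul]; congr 1; group
    have key : (of ℤ G t - 1) * (of ℤ G b - 1) =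
        (of ℤ G (t * b * t⁻¹) - 1) * (of ℤ G t - 1) +
        (of ℤ G (t * b * t⁻¹ * b⁻¹) - 1) * (of ℤ G b - 1) +
        (of ℤ G (t * b * t⁻¹ * b⁻¹) - 1) := by
      have lhs : (of ℤ G t - 1) * (of ℤ G b - 1)
          = of ℤ G t * of ℤ G b - of ℤ G t - of ℤ G b + 1 := by noncomm_ring
      have rhs : (of ℤ G (t * b * t⁻¹) - 1) * (of ℤ G t - 1) +
          (of ℤ G (t * b * t⁻¹ * b⁻¹) - 1) * (of ℤ G b - 1) +
          (of ℤ G (t * b * t⁻¹ * b⁻¹) - 1)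
          = of ℤ G (t * b * t⁻¹) * of ℤ G t + of ℤ G (t * b * t⁻¹ * b⁻¹) * of ℤ G b
            - of ℤ G (t * b * t⁻¹) - of ℤ G t - of ℤ G b + 1 := by noncomm_ring
      rw [lhs, rhs, e1, e2]
      noncomm_ring
    rcases List.eq_nil_or_concat l' with hl | _
    · subst hl
      simp only [List.map_cons, List.map_nil, List.prod_cons, List.prod_nil, mul_one,
        List.sum_cons, List.sum_nil, add_zero]
      rw [key]
      refine add_mem (add_mem (Submodule.mem_sup_left ?_) (Submodule.mem_sup_right ?_))
        (Submodule.mem_sup_right ?_)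
      · exact Submodule.mul_mem_mul (mem_nIdeal_single hk hb') (mem_relAug ht)
      · have h1 : (of ℤ G (t * b * t⁻¹ * b⁻¹) - 1) * (of ℤ G b - 1) ∈
            nIdeal G Ns (k + 1) * nIdeal G Ns k :=
          Submodule.mul_mem_mul (mem_nIdeal_single (by omega) hc) (mem_nIdeal_single hk hb)
        exact nIdeal_anti (by omega) (nIdeal_mul_nIdeal (k + 1) k h1)
      · exact mem_nIdeal_single (by omega) hc
    · have hl : l' ≠ [] := by rintro rfl; simp_all
      have hcond' : ∀ q ∈ l', 1 ≤ q.1 ∧ q.2 ∈ Ns q.1 := fun q hq => hcond q (by simp [hq])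
      have hP' : (l'.map fun p => of ℤ G p.2 - 1).prod ∈
          nIdeal G Ns ((l'.map Prod.fst).sum) :=
        Submodule.subset_span ⟨l', hl, hcond', le_rfl, rfl⟩
      have IH := ih hl hcond' t ht
      simp only [List.map_cons, List.prod_cons, List.sum_cons]
      rw [← mul_assoc, key, add_mul, add_mul]
      refine add_mem (add_mem ?_ (Submodule.mem_sup_right ?_)) (Submodule.mem_sup_right ?_)
      · rw [mul_assoc]
        exact lift_mul IH hk hb'
      · have h1 : ((of ℤ G (t * b * t⁻¹ * b⁻¹) - 1) * (of ℤ G b - 1)) *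
            (l'.map fun p => of ℤ G p.2 - 1).prod ∈
            (nIdeal G Ns (k + 1) * nIdeal G Ns k) * nIdeal G Ns ((l'.map Prod.fst).sum) :=
          Submodule.mul_mem_mul
            (Submodule.mul_mem_mul (mem_nIdeal_single (by omega) hc)
              (mem_nIdeal_single hk hb)) hP'
        have h2 := (mul_le_mul' (nIdeal_mul_nIdeal (k + 1) k)
          (le_refl (nIdeal G Ns ((l'.map Prod.fst).sum)))) h1
        have h3 := nIdeal_mul_nIdeal (Ns := Ns) (k + 1 + k) ((l'.map Prod.fst).sum) h2
        exact nIdeal_anti (by omega) h3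
      · have h1 : (of ℤ G (t * b * t⁻¹ * b⁻¹) - 1) *
            (l'.map fun p => of ℤ G p.2 - 1).prod ∈
            nIdeal G Ns (k + 1) * nIdeal G Ns ((l'.map Prod.fst).sum) :=
          Submodule.mul_mem_mul (mem_nIdeal_single (by omega) hc) hP'
        have h2 := nIdeal_mul_nIdeal (Ns := Ns) (k + 1) ((l'.map Prod.fst).sum) h1
        exact nIdeal_anti (by omega) h2

lemma relAug_mul_nIdeal
    (hnorm : ∀ k, 1 ≤ k → ∀ b ∈ Ns k, ∀ t : G, t * b * t⁻¹ ∈ Ns k)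
    (hNsrec : ∀ i, 1 ≤ i → Ns (i + 1) = ⁅Ns i, (⊤ : Subgroup G)⁆) (j : ℕ) :
    relAug G T * nIdeal G Ns j ≤ nIdeal G Ns j * relAug G T ⊔ nIdeal G Ns (j + 1) := by
  rw [relAug, nIdeal, Submodule.span_mul_span]
  refine Submodule.span_le.2 ?_
  rintro x ⟨a, ⟨t, ht, rfl⟩, b, ⟨l, h1, h2, h3, rfl⟩, rfl⟩
  have h := swap_aux hnorm hNsrec l h1 h2 t ht
  have hle : nIdeal G Ns ((l.map Prod.fst).sum) * relAug G T ⊔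
      nIdeal G Ns ((l.map Prod.fst).sum + 1) ≤
      nIdeal G Ns j * relAug G T ⊔ nIdeal G Ns (j + 1) :=
    sup_le_sup ((mul_le_mul' (nIdeal_anti h3) le_rfl)) (nIdeal_anti (by omega))
  exact hle h

end Swap
section Main

open Pointwise

variable {G : Type*} [Group G] {Ns : ℕ → Subgroup G} {N T : Subgroup G}

lemma augI_decomp [N.Normal] (hjoin : N ⊔ T = ⊤) (hNs1 : Ns 1 = N) :
    augI G ≤ nIdeal G Ns 1 ⊔ relAug G T ⊔ nIdeal G Ns 1 * relAug G T := by
  refine Submodule.span_le.2 ?_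
  rintro x ⟨g, rfl⟩
  have hg : g ∈ ((N : Set G) * (T : Set G)) := by
    rw [← Subgroup.normal_mul, hjoin]
    trivial
  obtain ⟨a, ha, t, ht, rfl⟩ := hg
  have key : of ℤ G (a * t) - 1 =
      (of ℤ G a - 1) + (of ℤ G t - 1) + (of ℤ G a - 1) * (of ℤ G t - 1) := by
    rw [map_mul]; noncomm_ring
  rw [key]
  have ha1 : of ℤ G a - 1 ∈ nIdeal G Ns 1 := mem_nIdeal_single le_rfl (by rw [hNs1]; exact ha)
  exact add_mem
    (add_mem (Submodule.mem_sup_left (Submodule.mem_sup_left ha1))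
      (Submodule.mem_sup_left (Submodule.mem_sup_right (mem_relAug ht))))
    (Submodule.mem_sup_right (Submodule.mul_mem_mul ha1 (mem_relAug ht)))

lemma augI_mul_nIdeal [N.Normal] (hjoin : N ⊔ T = ⊤) (hNs1 : Ns 1 = N)
    (hnorm : ∀ k, 1 ≤ k → ∀ b ∈ Ns k, ∀ t : G, t * b * t⁻¹ ∈ Ns k)
    (hNsrec : ∀ i, 1 ≤ i → Ns (i + 1) = ⁅Ns i, (⊤ : Subgroup G)⁆) (j : ℕ) :
    augI G * nIdeal G Ns j ≤ nIdeal G Ns (j + 1) ⊔ nIdeal G Ns j * relAug G T := by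
  calc augI G * nIdeal G Ns j
      ≤ (nIdeal G Ns 1 ⊔ relAug G T ⊔ nIdeal G Ns 1 * relAug G T) * nIdeal G Ns j :=
        (mul_le_mul' (augI_decomp hjoin hNs1) le_rfl)
    _ = nIdeal G Ns 1 * nIdeal G Ns j ⊔ relAug G T * nIdeal G Ns j ⊔
        (nIdeal G Ns 1 * relAug G T) * nIdeal G Ns j := by
        rw [Submodule.sup_mul, Submodule.sup_mul]
    _ ≤ nIdeal G Ns (j + 1) ⊔ nIdeal G Ns j * relAug G T := by
        refine sup_le (sup_le ?_ ?_) ?_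
        · exact le_sup_left.trans'
            ((nIdeal_mul_nIdeal 1 j).trans (nIdeal_anti (by omega)))
        · exact (relAug_mul_nIdeal hnorm hNsrec j).trans
            (sup_le le_sup_right le_sup_left)
        · rw [mul_assoc]
          calc nIdeal G Ns 1 * (relAug G T * nIdeal G Ns j)
              ≤ nIdeal G Ns 1 * (nIdeal G Ns j * relAug G T ⊔ nIdeal G Ns (j + 1)) :=
                (mul_le_mul' le_rfl (relAug_mul_nIdeal hnorm hNsrec j))
            _ = nIdeal G Ns 1 * (nIdeal G Ns j * relAug G T) ⊔
                nIdeal G Ns 1 * nIdeal G Ns (j + 1) := Submodule.mul_sup _ _ _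
            _ ≤ nIdeal G Ns j * relAug G T ⊔ nIdeal G Ns (j + 1) := by
                refine sup_le (le_sup_left.trans' ?_) (le_sup_right.trans' ?_)
                · rw [← mul_assoc]
                  exact (mul_le_mul' ((nIdeal_mul_nIdeal 1 j).trans (nIdeal_anti (by omega))) le_rfl)
                · exact (nIdeal_mul_nIdeal 1 (j + 1)).trans (nIdeal_anti (by omega))
            _ ≤ nIdeal G Ns (j + 1) ⊔ nIdeal G Ns j * relAug G T := sup_le le_sup_right le_sup_left

lemma le_Kfil (Δ : ℕ → Submodule ℤ (MonoidAlgebra ℤ G)) (n i : ℕ)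
    (hi : i ∈ Finset.Ico 1 n) : Δ (n - i) * relAug G T ^ i ≤ Kfil G Δ T n :=
  le_iSup₂ (f := fun i (_ : i ∈ Finset.Ico 1 n) => Δ (n - i) * relAug G T ^ i) i hi

lemma Kfil_le (Δ : ℕ → Submodule ℤ (MonoidAlgebra ℤ G)) (n : ℕ)
    {P : Submodule ℤ (MonoidAlgebra ℤ G)}
    (h : ∀ i ∈ Finset.Ico 1 n, Δ (n - i) * relAug G T ^ i ≤ P) : Kfil G Δ T n ≤ P :=
  iSup₂_le h

lemma dir1 (hNsrec : ∀ i, 1 ≤ i → Ns (i + 1) = ⁅Ns i, (⊤ : Subgroup G)⁆)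
    {n : ℕ} (hn : 1 ≤ n) :
    relAug G T ^ (n + 1) ⊔ Kfil G (nIdeal G Ns) T (n + 1) ≤ augI G ^ n * relAug G T := by
  have hIT : relAug G T ≤ augI G := Submodule.span_le.2 (by rintro x ⟨t, _, rfl⟩; exact mem_augI t)
  refine sup_le ?_ (Kfil_le _ _ ?_)
  · rw [pow_succ]
    exact (mul_le_mul' (pow_mono hIT n) le_rfl)
  · intro i hi
    rw [Finset.mem_Ico] at hi
    obtain ⟨j, rfl⟩ : ∃ j, i = j + 1 := ⟨i - 1, by omega⟩
    have hj : j < n := by omega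
    have e : n + 1 - (j + 1) = n - j := by omega
    rw [e, pow_succ, ← mul_assoc]
    have h1 : nIdeal G Ns (n - j) * relAug G T ^ j ≤ augI G ^ (n - j) * augI G ^ j :=
      mul_le_mul' (nIdeal_le_pow hNsrec (by omega)) (pow_mono hIT j)
    refine (mul_le_mul' h1 le_rfl).trans ?_
    rw [← pow_add]
    have e2 : n - j + j = n := by omega
    rw [e2]

lemma dir2 [N.Normal] (hjoin : N ⊔ T = ⊤) (hNs1 : Ns 1 = N)
    (hnorm : ∀ k, 1 ≤ k → ∀ b ∈ Ns k, ∀ t : G, t * b * t⁻¹ ∈ Ns k)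
    (hNsrec : ∀ i, 1 ≤ i → Ns (i + 1) = ⁅Ns i, (⊤ : Subgroup G)⁆) :
    ∀ n, 1 ≤ n →
      augI G ^ n * relAug G T ≤ relAug G T ^ (n + 1) ⊔ Kfil G (nIdeal G Ns) T (n + 1) := by
  have hIT2 : ∀ m, 1 ≤ m → relAug G T ^ (m + 1) ≤ relAug G T ^ m :=
    fun m hm => pow_succ_le (relAug_mul_relAug T) m hm
  have hK1 : ∀ m : ℕ, nIdeal G Ns (m + 1) * relAug G T ≤ Kfil G (nIdeal G Ns) T (m + 2) := by
    intro m
    have hi : 1 ∈ Finset.Ico 1 (m + 2) := by simp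
    have := le_Kfil (T := T) (nIdeal G Ns) (m + 2) 1 hi
    have e : m + 2 - 1 = m + 1 := by omega
    rwa [e, pow_one] at this
  intro n hn
  induction n, hn using Nat.le_induction with
  | base =>
    rw [pow_one]
    calc augI G * relAug G T
        ≤ (nIdeal G Ns 1 ⊔ relAug G T ⊔ nIdeal G Ns 1 * relAug G T) * relAug G T :=
          (mul_le_mul' (augI_decomp hjoin hNs1) le_rfl)
      _ = nIdeal G Ns 1 * relAug G T ⊔ relAug G T * relAug G T ⊔
          (nIdeal G Ns 1 * relAug G T) * relAug G T := by
          rw [Submodule.sup_mul, Submodule.sup_mul]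
      _ ≤ relAug G T ^ (1 + 1) ⊔ Kfil G (nIdeal G Ns) T (1 + 1) := by
          refine sup_le (sup_le ?_ ?_) ?_
          · exact le_sup_right.trans' (hK1 0)
          · rw [← sq]
            exact le_sup_left
          · rw [mul_assoc]
            refine le_sup_right.trans' ((hK1 0).trans' ?_)
            exact (mul_le_mul' le_rfl (relAug_mul_relAug T))
  | succ n hn ih =>
    have hIT : relAug G T ≤ augI G :=
      Submodule.span_le.2 (by rintro x ⟨t, _, rfl⟩; exact mem_augI t)
    calc augI G ^ (n + 1) * relAug G T
        = augI G * (augI G ^ n * relAug G T) := by rw [pow_succ', mul_assoc]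
      _ ≤ augI G * (relAug G T ^ (n + 1) ⊔ Kfil G (nIdeal G Ns) T (n + 1)) :=
          mul_le_mul' le_rfl ih
      _ = augI G * relAug G T ^ (n + 1) ⊔ augI G * Kfil G (nIdeal G Ns) T (n + 1) :=
          Submodule.mul_sup _ _ _
      _ ≤ relAug G T ^ (n + 2) ⊔ Kfil G (nIdeal G Ns) T (n + 2) := by
          refine sup_le ?_ ?_
          · calc augI G * relAug G T ^ (n + 1)
                ≤ (nIdeal G Ns 1 ⊔ relAug G T ⊔ nIdeal G Ns 1 * relAug G T) *
                    relAug G T ^ (n + 1) :=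
                  (mul_le_mul' (augI_decomp hjoin hNs1) le_rfl)
              _ = nIdeal G Ns 1 * relAug G T ^ (n + 1) ⊔
                  relAug G T * relAug G T ^ (n + 1) ⊔
                  (nIdeal G Ns 1 * relAug G T) * relAug G T ^ (n + 1) := by
                  rw [Submodule.sup_mul, Submodule.sup_mul]
              _ ≤ relAug G T ^ (n + 2) ⊔ Kfil G (nIdeal G Ns) T (n + 2) := by
                  refine sup_le (sup_le ?_ ?_) ?_
                  · -- Λ1 * IT^{n+1} ≤ K(n+2)
                    refine le_sup_right.trans' ?_
                    have hi : n + 1 ∈ Finset.Ico 1 (n + 2) := by simp [Finset.mem_Ico]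
                    have := le_Kfil (T := T) (nIdeal G Ns) (n + 2) (n + 1) hi
                    have e : n + 2 - (n + 1) = 1 := by omega
                    rwa [e] at this
                  · rw [← pow_succ']
                    exact le_sup_left
                  · rw [mul_assoc, ← pow_succ']
                    refine le_sup_right.trans' ?_
                    have h1 : nIdeal G Ns 1 * relAug G T ^ (n + 2) ≤
                        nIdeal G Ns 1 * relAug G T ^ (n + 1) :=
                      (mul_le_mul' le_rfl (hIT2 (n + 1) (by omega)))
                    refine h1.trans ?_
                    have hi : n + 1 ∈ Finset.Ico 1 (n + 2) := by simp [Finset.mem_Ico]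
                    have := le_Kfil (T := T) (nIdeal G Ns) (n + 2) (n + 1) hi
                    have e : n + 2 - (n + 1) = 1 := by omega
                    rwa [e] at this
          · rw [Kfil, Submodule.mul_iSup]
            refine iSup_le fun i => ?_
            rw [Submodule.mul_iSup]
            refine iSup_le fun hi => ?_
            rw [Finset.mem_Ico] at hi
            rw [← mul_assoc]
            calc (augI G * nIdeal G Ns (n + 1 - i)) * relAug G T ^ i
                ≤ (nIdeal G Ns (n + 1 - i + 1) ⊔ nIdeal G Ns (n + 1 - i) * relAug G T) *
                    relAug G T ^ i :=
                  (mul_le_mul' (augI_mul_nIdeal hjoin hNs1 hnorm hNsrec _) le_rfl)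
              _ = nIdeal G Ns (n + 1 - i + 1) * relAug G T ^ i ⊔
                  (nIdeal G Ns (n + 1 - i) * relAug G T) * relAug G T ^ i := by
                  rw [Submodule.sup_mul]
              _ ≤ relAug G T ^ (n + 2) ⊔ Kfil G (nIdeal G Ns) T (n + 2) := by
                  refine sup_le (le_sup_right.trans' ?_) (le_sup_right.trans' ?_)
                  · have e : n + 1 - i + 1 = n + 2 - i := by omega
                    rw [e]
                    exact le_Kfil (nIdeal G Ns) (n + 2) i (by simp [Finset.mem_Ico]; omega)
                  · rw [mul_assoc, ← pow_succ']
                    have e : n + 1 - i = n + 2 - (i + 1) := by omega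
                    rw [e, pow_succ]
                    have h2 : nIdeal G Ns (n + 2 - (i + 1)) * (relAug G T ^ i * relAug G T) ≤
                        nIdeal G Ns (n + 2 - (i + 1)) * relAug G T ^ (i + 1) := by
                      rw [← pow_succ]
                    exact h2.trans (le_Kfil (nIdeal G Ns) (n + 2) (i + 1)
                      (by simp [Finset.mem_Ico]; omega))

end Main
section Inter

open Pointwise

variable {G : Type*} [Group G] {Ns : ℕ → Subgroup G} {N T : Subgroup G}

/-- Elements of `ℤ[G]` supported on `T`. -/
noncomputable def suppSub (G : Type*) [Group G] (T : Subgroup G) :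
    Submodule ℤ (MonoidAlgebra ℤ G) where
  carrier := {x | ∀ g ∈ x.coeff.support, g ∈ T}
  add_mem' := by
    classical
    intro a b ha hb g hg
    rcases Finset.mem_union.mp (Finsupp.support_add (g₁ := a.coeff) (g₂ := b.coeff) hg) with h | h
    · exact ha g h
    · exact hb g h
  zero_mem' := by simp
  smul_mem' := by
    intro c x hx g hg
    exact hx g (Finsupp.support_smul (g := x.coeff) hg)

lemma mem_suppSub {x : MonoidAlgebra ℤ G} :
    x ∈ suppSub G T ↔ ∀ g ∈ x.coeff.support, g ∈ T := Iff.rfl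

lemma relAug_le_suppSub : relAug G T ≤ suppSub G T := by
  classical
  refine Submodule.span_le.2 ?_
  rintro x ⟨h, hh, rfl⟩
  rw [SetLike.mem_coe, mem_suppSub]
  intro g hg
  rw [MonoidAlgebra.of_apply, MonoidAlgebra.one_def, MonoidAlgebra.coeff_sub,
    MonoidAlgebra.coeff_single, MonoidAlgebra.coeff_single] at hg
  rcases Finset.mem_union.mp (Finsupp.support_sub hg) with h1 | h1
  · rw [Finset.mem_singleton.mp (Finsupp.support_single_subset h1)]
    exact hh
  · rw [Finset.mem_singleton.mp (Finsupp.support_single_subset h1)]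
    exact one_mem T

lemma suppSub_mul : suppSub G T * suppSub G T ≤ suppSub G T := by
  classical
  refine Submodule.mul_le.2 fun x hx y hy => ?_
  rw [mem_suppSub]
  intro g hg
  have h1 := MonoidAlgebra.support_coeff_mul_subset x y hg
  rw [Finset.mem_mul] at h1
  obtain ⟨a, ha, b, hb, rfl⟩ := h1
  exact mul_mem (hx a ha) (hy b hb)

lemma relAug_pow_le_suppSub : ∀ m, 1 ≤ m → relAug G T ^ m ≤ suppSub G T := by
  intro m hm
  induction m, hm using Nat.le_induction with
  | base => rw [pow_one]; exact relAug_le_suppSub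
  | succ m hm ih =>
    rw [pow_succ]
    exact (mul_le_mul' ih relAug_le_suppSub).trans suppSub_mul

lemma pi_of (N : Subgroup G) [N.Normal] (g : G) :
    MonoidAlgebra.mapDomainRingHom ℤ (QuotientGroup.mk' N) (of ℤ G g)
      = of ℤ (G ⧸ N) (g : G ⧸ N) := by
  simp [MonoidAlgebra.mapDomainRingHom_apply, MonoidAlgebra.of_apply,
    Finsupp.mapDomain_single]

lemma nIdeal_le_ker [N.Normal] (hNle : ∀ k, 1 ≤ k → Ns k ≤ N) (j : ℕ)
    {x : MonoidAlgebra ℤ G} (hx : x ∈ nIdeal G Ns j) :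
    MonoidAlgebra.mapDomainRingHom ℤ (QuotientGroup.mk' N) x = 0 := by
  induction hx using Submodule.span_induction with
  | mem x hx =>
    obtain ⟨l, h1, h2, h3, rfl⟩ := hx
    obtain ⟨p, l', rfl⟩ := List.exists_cons_of_ne_nil h1
    rw [List.map_cons, List.prod_cons, map_mul]
    have hz : MonoidAlgebra.mapDomainRingHom ℤ (QuotientGroup.mk' N) (of ℤ G p.2 - 1) = 0 := by
      rw [map_sub, map_one, pi_of]
      have : (p.2 : G ⧸ N) = 1 :=
        (QuotientGroup.eq_one_iff p.2).mpr (hNle p.1 (h2 p (by simp)).1 (h2 p (by simp)).2)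
      rw [this, map_one, sub_self]
    rw [hz, zero_mul]
  | zero => exact map_zero _
  | add x y _ _ hx hy => rw [map_add, hx, hy, add_zero]
  | smul a x _ hx => rw [map_zsmul, hx, smul_zero]

/-- The kernel of the retraction, as a ℤ-submodule. -/
noncomputable def kerSub (G : Type*) [Group G] (N : Subgroup G) [N.Normal] :
    Submodule ℤ (MonoidAlgebra ℤ G) where
  carrier := {x | MonoidAlgebra.mapDomainRingHom ℤ (QuotientGroup.mk' N) x = 0}
  add_mem' := by
    intro a b ha hb
    simp only [Set.mem_setOf_eq] at *
    rw [map_add, ha, hb, add_zero]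
  zero_mem' := by simp
  smul_mem' := by
    intro c x hx
    simp only [Set.mem_setOf_eq] at *
    rw [map_zsmul, hx, smul_zero]

lemma Kfil_le_ker [N.Normal] (hNle : ∀ k, 1 ≤ k → Ns k ≤ N) (n : ℕ)
    {x : MonoidAlgebra ℤ G} (hx : x ∈ Kfil G (nIdeal G Ns) T n) :
    MonoidAlgebra.mapDomainRingHom ℤ (QuotientGroup.mk' N) x = 0 := by
  have hle : Kfil G (nIdeal G Ns) T n ≤ kerSub G N := by
    refine Kfil_le _ _ fun i hi => ?_
    refine Submodule.mul_le.2 fun a ha b hb => ?_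
    show MonoidAlgebra.mapDomainRingHom ℤ (QuotientGroup.mk' N) (a * b) = 0
    rw [map_mul, nIdeal_le_ker hNle _ ha, zero_mul]
  exact hle hx

lemma inj_on_supp (hdisj : N ⊓ T = ⊥) [N.Normal] {x : MonoidAlgebra ℤ G}
    (hx : x ∈ suppSub G T)
    (hx0 : MonoidAlgebra.mapDomainRingHom ℤ (QuotientGroup.mk' N) x = 0) : x = 0 := by
  have hinj : Set.InjOn (QuotientGroup.mk' N) (T : Set G) := by
    intro a ha b hb hab
    have h1 : a⁻¹ * b ∈ N := by
      rw [QuotientGroup.mk'_apply, QuotientGroup.mk'_apply] at hab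
      exact (QuotientGroup.eq).mp hab
    have ha' : a ∈ T := ha
    have hb' : b ∈ T := hb
    have h2 : a⁻¹ * b ∈ N ⊓ T := Subgroup.mem_inf.mpr ⟨h1, mul_mem (inv_mem ha') hb'⟩
    rw [hdisj, Subgroup.mem_bot] at h2
    exact inv_mul_eq_one.mp h2
  have hm1 : x.coeff ∈ {w : G →₀ ℤ | ↑w.support ⊆ (T : Set G)} := by
    intro g hg
    exact (mem_suppSub.mp hx) g hg
  have hm2 : (0 : G →₀ ℤ) ∈ {w : G →₀ ℤ | ↑w.support ⊆ (T : Set G)} := by simp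
  refine MonoidAlgebra.coeff_injective (Finsupp.mapDomain_injOn (T : Set G) hinj hm1 hm2 ?_)
  rw [MonoidAlgebra.coeff_zero, Finsupp.mapDomain_zero]
  rw [MonoidAlgebra.mapDomainRingHom_apply] at hx0
  exact congrArg MonoidAlgebra.coeff hx0

end Inter
/-- for `G = N ⋊ T` and all `n ≥ 1`,
`I(G)^n·I(T) = I(T)^{n+1} ⊕ 𝒦_{n+1}` as abelian groups, where
`𝒦_{n+1} = Σ_{i=1}^{n} Λ_{n+1-i}·I(T)^i` with `Λ_j = I_𝒩^j(N)`. -/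
theorem stmt11 (G : Type*) [Group G] (N T : Subgroup G) [N.Normal]
    (hdisj : N ⊓ T = ⊥) (hjoin : N ⊔ T = ⊤)
    (Ns : ℕ → Subgroup G) (hNs1 : Ns 1 = N)
    (hNsrec : ∀ i, 1 ≤ i → Ns (i + 1) = ⁅Ns i, (⊤ : Subgroup G)⁆)
    (n : ℕ) (hn : 1 ≤ n) :
    (augI G) ^ n * relAug G T =
      (relAug G T) ^ (n + 1) ⊔ Kfil G (nIdeal G Ns) T (n + 1) ∧
    (relAug G T) ^ (n + 1) ⊓ Kfil G (nIdeal G Ns) T (n + 1) = ⊥ := by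
  have hnormal : ∀ k, 1 ≤ k → (Ns k).Normal := by
    intro k hk
    induction k, hk using Nat.le_induction with
    | base => rw [hNs1]; infer_instance
    | succ k hk ih =>
      rw [hNsrec k hk]
      haveI := ih
      infer_instance
  have hnorm : ∀ k, 1 ≤ k → ∀ b ∈ Ns k, ∀ t : G, t * b * t⁻¹ ∈ Ns k :=
    fun k hk b hb t => (hnormal k hk).conj_mem b hb t
  have hNle : ∀ k, 1 ≤ k → Ns k ≤ N := by
    intro k hk
    induction k, hk using Nat.le_induction with
    | base => rw [hNs1]
    | succ k hk ih =>
      rw [hNsrec k hk]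
      haveI := hnormal k hk
      exact (Subgroup.commutator_le_left (Ns k) ⊤).trans ih
  constructor
  · exact le_antisymm (dir2 hjoin hNs1 hnorm hNsrec n hn) (dir1 hNsrec hn)
  · rw [eq_bot_iff]
    intro x hx
    rw [Submodule.mem_inf] at hx
    obtain ⟨h1, h2⟩ := hx
    have hs : x ∈ suppSub G T := relAug_pow_le_suppSub (n + 1) (by omega) h1
    have hk : MonoidAlgebra.mapDomainRingHom ℤ (QuotientGroup.mk' N) x = 0 :=
      Kfil_le_ker hNle (n + 1) h2
    rw [Submodule.mem_bot]
    exact inj_on_supp hdisj hs hk
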